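/- For every natural number k and every P ∈ R weighted homogeneous of weight k (for the weights 2, 4, 6 on X₂, X₄, X₆), one has ∂(D(P)) = D(∂(P)) + (k/12)·P. -/

import Mathlib

open MvPolynomial

noncomputable section

/-- Euler identity for the "weight" derivation on a monomial. -/
lemma euler_monomial (w : Fin 3 → ℕ) (d : Fin 3 →₀ ℕ) (r : ℂ) :
    (mkDerivation ℂ (fun i : Fin 3 => ((w i : ℂ) / 12) • (X i : MvPolynomial (Fin 3) ℂ)))
        ((monomial d) r)
      = (((Finsupp.weight w d : ℕ) : ℂ) / 12) • (monomial d) r := by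
  rw [mkDerivation_monomial]
  have hweight : ((Finsupp.weight w d : ℕ) : ℂ)
      = ∑ i ∈ d.support, (d i : ℂ) * (w i : ℂ) := by
    rw [Finsupp.weight_apply, Finsupp.sum]
    push_cast [smul_eq_mul]
    exact Finset.sum_congr rfl fun i _ => by ring
  have hsum : (d.sum fun i n => (monomial (d - Finsupp.single i 1)) ((n : ℂ)) •
        ((w i : ℂ) / 12) • (X i : MvPolynomial (Fin 3) ℂ))
      = (((Finsupp.weight w d : ℕ) : ℂ) / 12) • (monomial d) (1 : ℂ) := by
    rw [Finsupp.sum, hweight, Finset.sum_div, Finset.sum_smul]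
    apply Finset.sum_congr rfl
    intro i hi
    have hdi : d i ≠ 0 := Finsupp.mem_support_iff.mp hi
    have hexp : d - Finsupp.single i 1 + Finsupp.single i 1 = d := by
      ext j
      by_cases hj : j = i
      · subst hj
        simp [Nat.sub_add_cancel (Nat.one_le_iff_ne_zero.mpr hdi)]
      · simp [Finsupp.single_apply, Ne.symm hj]
    have hmono : (monomial (d - Finsupp.single i 1)) ((d i : ℂ)) * X i
        = (d i : ℂ) • (monomial d) (1 : ℂ) := by
      rw [X, monomial_mul, hexp, smul_monomial, smul_eq_mul, mul_one]
    calc (monomial (d - Finsupp.single i 1)) ((d i : ℂ)) •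
          ((w i : ℂ) / 12) • (X i : MvPolynomial (Fin 3) ℂ)
        = ((w i : ℂ) / 12) • ((monomial (d - Finsupp.single i 1)) ((d i : ℂ)) * X i) := by
          rw [smul_comm]; rfl
      _ = ((w i : ℂ) / 12) • ((d i : ℂ) • (monomial d) (1 : ℂ)) := by rw [hmono]
      _ = ((d i : ℂ) * (w i : ℂ) / 12) • (monomial d) (1 : ℂ) := by
          rw [smul_smul]; congr 1; ring
  rw [hsum, smul_comm, smul_monomial, smul_eq_mul, mul_one]

/-- Euler identity for weighted homogeneous polynomials. -/
lemma euler_homog (w : Fin 3 → ℕ) (P : MvPolynomial (Fin 3) ℂ) (k : ℕ)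
    (hP : P.IsWeightedHomogeneous w k) :
    (mkDerivation ℂ (fun i : Fin 3 => ((w i : ℂ) / 12) • (X i : MvPolynomial (Fin 3) ℂ))) P
      = ((k : ℂ) / 12) • P := by
  conv_lhs => rw [P.as_sum]
  rw [map_sum]
  conv_rhs => rw [P.as_sum, Finset.smul_sum]
  apply Finset.sum_congr rfl
  intro d hd
  rw [euler_monomial]
  have hdeg : Finsupp.weight w d = k := hP (mem_support_iff.mp hd)
  rw [hdeg]

/-- The commutator of `∂/∂X₀` with the Ramanujan–Serre derivation is the weight derivation. -/
lemma commutator_eq (D : Derivation ℂ (MvPolynomial (Fin 3) ℂ) (MvPolynomial (Fin 3) ℂ))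
    (hD2 : D (X 0) = (1 / 12 : ℂ) • ((X 0) ^ 2 - X 1))
    (hD4 : D (X 1) = (1 / 3 : ℂ) • (X 0 * X 1 - X 2))
    (hD6 : D (X 2) = (1 / 2 : ℂ) • (X 0 * X 2 - (X 1) ^ 2)) :
    ⁅(pderiv 0 : Derivation ℂ (MvPolynomial (Fin 3) ℂ) (MvPolynomial (Fin 3) ℂ)), D⁆
      = mkDerivation ℂ (fun i : Fin 3 =>
          (((![2, 4, 6] i : ℕ) : ℂ) / 12) • (X i : MvPolynomial (Fin 3) ℂ)) := by
  have p00 : pderiv (0:Fin 3) (X (0:Fin 3) : MvPolynomial (Fin 3) ℂ) = 1 := pderiv_X_self 0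
  have p01 : pderiv (0:Fin 3) (X (1:Fin 3) : MvPolynomial (Fin 3) ℂ) = 0 :=
    pderiv_X_of_ne (by decide)
  have p02 : pderiv (0:Fin 3) (X (2:Fin 3) : MvPolynomial (Fin 3) ℂ) = 0 :=
    pderiv_X_of_ne (by decide)
  have h0 : ⁅(pderiv 0 : Derivation ℂ (MvPolynomial (Fin 3) ℂ) (MvPolynomial (Fin 3) ℂ)), D⁆ (X 0)
      = mkDerivation ℂ (fun i : Fin 3 =>
          (((![2, 4, 6] i : ℕ) : ℂ) / 12) • (X i : MvPolynomial (Fin 3) ℂ)) (X 0) := by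
    rw [Derivation.commutator_apply, hD2, mkDerivation_X, p00, Derivation.map_one_eq_zero]
    rw [Derivation.map_smul, map_sub, pow_two, Derivation.leibniz, p00, p01]
    simp only [smul_eq_mul, mul_one, sub_zero, Matrix.cons_val_zero]
    rw [show ((2:ℕ):ℂ) = 2 by norm_num]
    match_scalars
    norm_num
  have h1 : ⁅(pderiv 0 : Derivation ℂ (MvPolynomial (Fin 3) ℂ) (MvPolynomial (Fin 3) ℂ)), D⁆ (X 1)
      = mkDerivation ℂ (fun i : Fin 3 =>
          (((![2, 4, 6] i : ℕ) : ℂ) / 12) • (X i : MvPolynomial (Fin 3) ℂ)) (X 1) := by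
    rw [Derivation.commutator_apply, hD4, mkDerivation_X, p01, map_zero]
    rw [Derivation.map_smul, map_sub, Derivation.leibniz, p00, p01, p02]
    simp only [smul_eq_mul, mul_one, mul_zero, zero_add, sub_zero,
      Matrix.cons_val_one, Matrix.head_cons]
    rw [show ((![4,6] (0:Fin 2) :ℕ):ℂ) = 4 by
      rw [show (![4,6] (0:Fin 2)) = 4 from rfl]; norm_num]
    match_scalars
    norm_num
  have h2 : ⁅(pderiv 0 : Derivation ℂ (MvPolynomial (Fin 3) ℂ) (MvPolynomial (Fin 3) ℂ)), D⁆ (X 2)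
      = mkDerivation ℂ (fun i : Fin 3 =>
          (((![2, 4, 6] i : ℕ) : ℂ) / 12) • (X i : MvPolynomial (Fin 3) ℂ)) (X 2) := by
    rw [Derivation.commutator_apply, hD6, mkDerivation_X, p02, map_zero]
    rw [Derivation.map_smul, map_sub, Derivation.leibniz, pow_two, Derivation.leibniz,
      p00, p01, p02]
    simp only [smul_eq_mul, mul_one, mul_zero, zero_add, sub_zero]
    rw [show ((![2,4,6] (2:Fin 3) :ℕ):ℂ) = 6 by
      rw [show (![2,4,6] (2:Fin 3)) = 6 from rfl]; norm_num]
    match_scalars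
    norm_num
  apply derivation_ext
  intro i
  fin_cases i
  · exact h0
  · exact h1
  · exact h2

/-- For the Ramanujan–Serre derivation `D` on `R = ℂ[X₂, X₄, X₆]` and the `E₂`-derivative
`∂ = ∂/∂X₂`, every weighted homogeneous `P` of weight `k` satisfies
`∂(D(P)) = D(∂(P)) + (k/12)·P`. -/
theorem E2_derivative_commutator
    (D : Derivation ℂ (MvPolynomial (Fin 3) ℂ) (MvPolynomial (Fin 3) ℂ))
    (hD2 : D (X 0) = (1 / 12 : ℂ) • ((X 0) ^ 2 - X 1))
    (hD4 : D (X 1) = (1 / 3 : ℂ) • (X 0 * X 1 - X 2))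
    (hD6 : D (X 2) = (1 / 2 : ℂ) • (X 0 * X 2 - (X 1) ^ 2))
    (P : MvPolynomial (Fin 3) ℂ) (k : ℕ)
    (hP : P.IsWeightedHomogeneous ![2, 4, 6] k) :
    pderiv 0 (D P) = D (pderiv 0 P) + ((k : ℂ) / 12) • P := by
  have h1 := congrArg (fun L : Derivation ℂ (MvPolynomial (Fin 3) ℂ) (MvPolynomial (Fin 3) ℂ) =>
    L P) (commutator_eq D hD2 hD4 hD6)
  rw [Derivation.commutator_apply] at h1
  rw [euler_homog ![2, 4, 6] P k hP] at h1
  linear_combination h1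

end
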